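/- Let Γ be a connected graph with exactly three distinct distance eigenvalues δ_0 > δ_1 > δ_2. If δ_1 or δ_2 has multiplicity 1, then Γ is a complete bipartite graph. -/

import Mathlib

open SimpleGraph Matrix Finset

/-- The distance matrix of a graph, with real entries. -/
noncomputable def distMatrix {V : Type*} [Fintype V] (G : SimpleGraph V) : Matrix V V ℝ :=
  Matrix.of fun x y => (G.dist x y : ℝ)

lemma distMatrix_isHermitian {V : Type*} [Fintype V] (G : SimpleGraph V) :
    (distMatrix G).IsHermitian := by
  ext x y
  simp [distMatrix, Matrix.conjTranspose_apply, SimpleGraph.dist_comm]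

/-- The multiset of eigenvalues (with multiplicity) of the distance matrix of `G`. -/
noncomputable def distSpec {V : Type*} [Fintype V] [DecidableEq V] (G : SimpleGraph V) :
    Multiset ℝ :=
  Finset.univ.val.map (distMatrix_isHermitian G).eigenvalues

namespace DCube9

variable {V : Type*} [Fintype V] [DecidableEq V]

lemma gram3_det (c0 c1 : ℝ) (f g : Fin 3 → ℝ) :
    Matrix.det (Matrix.of fun p q => c0 * f p * f q + c1 * g p * g q) = 0 := by
  simp [Matrix.det_fin_three]; ring

lemma spec_entry (A : Matrix V V ℝ) (hA : A.IsHermitian) (x y : V) :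
    A x y = ∑ j, hA.eigenvalues j * (hA.eigenvectorBasis j : V → ℝ) x *
      (hA.eigenvectorBasis j : V → ℝ) y := by
  conv_lhs => rw [hA.spectral_theorem]
  simp [Matrix.mul_apply, Matrix.diagonal, Matrix.IsHermitian.eigenvectorUnitary_apply, mul_comm]

lemma spec_delta (A : Matrix V V ℝ) (hA : A.IsHermitian) (x y : V) :
    ∑ j, (hA.eigenvectorBasis j : V → ℝ) x * (hA.eigenvectorBasis j : V → ℝ) y
      = if x = y then 1 else 0 := by
  have h : (hA.eigenvectorUnitary : Matrix V V ℝ) * (star (hA.eigenvectorUnitary : Matrix V V ℝ)) = 1 :=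
    (Matrix.mem_unitaryGroup_iff).mp (hA.eigenvectorUnitary).2
  have := congrFun (congrFun h x) y
  simp [Matrix.mul_apply, Matrix.IsHermitian.eigenvectorUnitary_apply, Matrix.one_apply] at this
  simpa [Matrix.one_apply] using this

lemma spec_col (A : Matrix V V ℝ) (hA : A.IsHermitian) (i j : V) :
    ∑ x, (hA.eigenvectorBasis i : V → ℝ) x * (hA.eigenvectorBasis j : V → ℝ) x
      = if i = j then 1 else 0 := by
  have h : (star (hA.eigenvectorUnitary : Matrix V V ℝ)) * (hA.eigenvectorUnitary : Matrix V V ℝ) = 1 :=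
    (Matrix.mem_unitaryGroup_iff').mp (hA.eigenvectorUnitary).2
  have := congrFun (congrFun h i) j
  simp [Matrix.mul_apply, Matrix.IsHermitian.eigenvectorUnitary_apply, Matrix.one_apply] at this
  simpa [Matrix.one_apply] using this

lemma psd_shift (A : Matrix V V ℝ) (hA : A.IsHermitian) (δ0 : ℝ)
    (hmax : ∀ i, hA.eigenvalues i ≤ δ0) :
    Matrix.PosSemidef (δ0 • (1 : Matrix V V ℝ) - A) := by
  have hU : (hA.eigenvectorUnitary : Matrix V V ℝ) * (star (hA.eigenvectorUnitary : Matrix V V ℝ)) = 1 :=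
    (Matrix.mem_unitaryGroup_iff).mp (hA.eigenvectorUnitary).2
  have h1 : δ0 • (1 : Matrix V V ℝ) - A =
      (hA.eigenvectorUnitary : Matrix V V ℝ) *
        Matrix.diagonal (fun i => δ0 - hA.eigenvalues i) *
        (star (hA.eigenvectorUnitary : Matrix V V ℝ)) := by
    have h2 : Matrix.diagonal (fun i => δ0 - hA.eigenvalues i)
        = δ0 • (1 : Matrix V V ℝ) - Matrix.diagonal (RCLike.ofReal ∘ hA.eigenvalues) := by
      rw [Matrix.smul_one_eq_diagonal, ← Matrix.diagonal_sub]
      congr 1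
    rw [h2, Matrix.mul_sub, Matrix.sub_mul]
    congr 1
    · rw [Matrix.mul_smul, Matrix.mul_one, Matrix.smul_mul, hU]
    · exact hA.spectral_theorem
  rw [h1]
  have hd : Matrix.PosSemidef (Matrix.diagonal (fun i => δ0 - hA.eigenvalues i)) :=
    Matrix.PosSemidef.diagonal (fun i => sub_nonneg.2 (hmax i))
  have := hd.mul_mul_conjTranspose_same (hA.eigenvectorUnitary : Matrix V V ℝ)
  rwa [Matrix.star_eq_conjTranspose]

lemma perron_all_ne (A : Matrix V V ℝ) (hA : A.IsHermitian) (δ0 : ℝ)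
    (hmax : ∀ i, hA.eigenvalues i ≤ δ0)
    (hdiag : ∀ v, A v v = 0) (hoff : ∀ u v : V, u ≠ v → 0 < A u v)
    (z : V → ℝ) (hz : A *ᵥ z = δ0 • z) (hz0 : z ≠ 0) : ∀ u, z u ≠ 0 := by
  have hAnn : ∀ u v, 0 ≤ A u v := by
    intro u v
    rcases eq_or_ne u v with rfl | h
    · simp [hdiag]
    · exact (hoff _ _ h).le
  set a : V → ℝ := fun k => |z k| with ha
  have haa : a ⬝ᵥ a = z ⬝ᵥ z := by
    simp only [dotProduct, ha]
    exact Finset.sum_congr rfl fun u _ => abs_mul_abs_self _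
  have hzAz : z ⬝ᵥ (A *ᵥ z) = δ0 * (z ⬝ᵥ z) := by
    rw [hz, dotProduct_smul, smul_eq_mul]
  have hle : z ⬝ᵥ (A *ᵥ z) ≤ a ⬝ᵥ (A *ᵥ a) := by
    simp only [dotProduct, mulVec, dotProduct, Finset.mul_sum]
    refine Finset.sum_le_sum fun u _ => Finset.sum_le_sum fun v _ => ?_
    have h1 : z u * z v ≤ a u * a v := by
      rw [ha]; simpa [abs_mul] using le_abs_self (z u * z v)
    calc z u * (A u v * z v) = A u v * (z u * z v) := by ring
      _ ≤ A u v * (a u * a v) := mul_le_mul_of_nonneg_left h1 (hAnn u v)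
      _ = a u * (A u v * a v) := by ring
  have hpsd := psd_shift A hA δ0 hmax
  have hgen : ((δ0 • (1 : Matrix V V ℝ) - A) *ᵥ a) = δ0 • a - A *ᵥ a := by
    rw [Matrix.sub_mulVec, Matrix.smul_mulVec, Matrix.one_mulVec]
  have h2 : a ⬝ᵥ ((δ0 • (1 : Matrix V V ℝ) - A) *ᵥ a) = 0 := by
    refine le_antisymm ?_ ?_
    · rw [hgen, dotProduct_sub, dotProduct_smul, smul_eq_mul, haa]
      linarith [hle, hzAz]
    · simpa using hpsd.dotProduct_mulVec_nonneg a
  have h3 : (δ0 • (1 : Matrix V V ℝ) - A) *ᵥ a = 0 := by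
    refine (hpsd.dotProduct_mulVec_zero_iff a).mp ?_
    simpa using h2
  have hAa : A *ᵥ a = δ0 • a := by
    rw [hgen] at h3
    exact (sub_eq_zero.mp h3).symm
  intro u hu
  have hau : a u = 0 := by simp [ha, hu]
  have hrow : ∑ v, A u v * a v = 0 := by
    have := congrFun hAa u
    simpa [Matrix.mulVec, dotProduct, hau] using this
  have hall : ∀ v ∈ Finset.univ, A u v * a v = 0 := by
    rw [← Finset.sum_eq_zero_iff_of_nonneg]
    · exact hrow
    · exact fun v _ => mul_nonneg (hAnn u v) (abs_nonneg _)
  apply hz0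
  funext v
  rcases eq_or_ne u v with rfl | h
  · exact hu
  · have h4 := hall v (Finset.mem_univ v)
    have h5 : a v = 0 := by
      rcases mul_eq_zero.mp h4 with h6 | h6
      · exact absurd h6 (hoff u v h).ne'
      · exact h6
    simpa [ha, abs_eq_zero] using h5

lemma perron_unique [Nonempty V] (A : Matrix V V ℝ) (hA : A.IsHermitian) (δ0 : ℝ)
    (hmax : ∀ i, hA.eigenvalues i ≤ δ0)
    (hdiag : ∀ v, A v v = 0) (hoff : ∀ u v : V, u ≠ v → 0 < A u v) :
    ∀ i j, hA.eigenvalues i = δ0 → hA.eigenvalues j = δ0 → i = j := by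
  intro i j hi hj
  by_contra hij
  set v : V → ℝ := (hA.eigenvectorBasis i : V → ℝ) with hvdef
  set w : V → ℝ := (hA.eigenvectorBasis j : V → ℝ) with hwdef
  have hvv : ∑ x, v x * v x = 1 := by simpa using spec_col A hA i i
  have hww : ∑ x, w x * w x = 1 := by simpa using spec_col A hA j j
  have hvw : ∑ x, v x * w x = 0 := by simpa [hij] using spec_col A hA i j
  have hv : A *ᵥ v = δ0 • v := by
    have h := hA.mulVec_eigenvectorBasis i
    rw [hi] at h
    exact h
  have hw : A *ᵥ w = δ0 • w := by
    have h := hA.mulVec_eigenvectorBasis j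
    rw [hj] at h
    exact h
  have hwne : w ≠ 0 := by
    intro h
    rw [h] at hww
    simpa using hww
  obtain ⟨i0⟩ := ‹Nonempty V›
  have hwi0 : w i0 ≠ 0 := perron_all_ne A hA δ0 hmax hdiag hoff w hw hwne i0
  set u : V → ℝ := fun x => w i0 * v x - v i0 * w x with hudef
  have hu : A *ᵥ u = δ0 • u := by
    have : u = w i0 • v - v i0 • w := by funext x; simp [hudef, smul_eq_mul]
    rw [this, Matrix.mulVec_sub, Matrix.mulVec_smul, Matrix.mulVec_smul, hv, hw]
    funext x
    simp [smul_eq_mul]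
    ring
  have hui0 : u i0 = 0 := by simp [hudef]; ring
  have hu0 : u = 0 := by
    by_contra h
    exact perron_all_ne A hA δ0 hmax hdiag hoff u hu h i0 hui0
  have hsum : ∑ x, v x * u x = w i0 := by
    have : ∀ x, v x * u x = w i0 * (v x * v x) - v i0 * (v x * w x) := by
      intro x; simp [hudef]; ring
    rw [Finset.sum_congr rfl fun x _ => this x, Finset.sum_sub_distrib, ← Finset.mul_sum,
      ← Finset.mul_sum, hvv, hvw]
    ring
  rw [hu0] at hsum
  simp at hsum
  exact hwi0 hsum.symm

lemma dist_step (G : SimpleGraph V) (hconn : G.Connected) {u v : V} {n : ℕ}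
    (h : G.dist u v = n + 1) : ∃ w, G.Adj u w ∧ G.dist w v = n := by
  obtain ⟨p, hp⟩ := hconn.exists_walk_length_eq_dist u v
  rw [h] at hp
  cases p with
  | nil => simp at hp
  | @cons _ w _ hadj q =>
    refine ⟨w, hadj, le_antisymm ?_ ?_⟩
    · have h1 : G.dist w v ≤ q.length := SimpleGraph.dist_le q
      simp only [SimpleGraph.Walk.length_cons] at hp
      omega
    · have h1 : G.dist u v ≤ G.dist u w + G.dist w v := hconn.dist_triangle
      have h2 : G.dist u w = 1 := SimpleGraph.dist_eq_one_iff_adj.mpr hadj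
      omega

lemma key_cubic (A : Matrix V V ℝ) (hA : A.IsHermitian) (δ : ℝ) (i0 i1 : V) (hi01 : i0 ≠ i1)
    (hrest : ∀ j, j ≠ i0 → j ≠ i1 → hA.eigenvalues j = δ)
    (hdiag : ∀ v, A v v = 0) (hsym : ∀ x y, A x y = A y x)
    (a b c : V) (hab : a ≠ b) (hac : a ≠ c) (hbc : b ≠ c) :
    (-δ)^3 - (-δ) * ((A a b)^2 + (A a c)^2 + (A b c)^2)
      + 2 * A a b * A a c * A b c = 0 := by
  have hN : ∀ x y : V, A x y - δ * (if x = y then 1 else 0)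
      = (hA.eigenvalues i0 - δ) * (hA.eigenvectorBasis i0 : V → ℝ) x * (hA.eigenvectorBasis i0 : V → ℝ) y
      + (hA.eigenvalues i1 - δ) * (hA.eigenvectorBasis i1 : V → ℝ) x * (hA.eigenvectorBasis i1 : V → ℝ) y := by
    intro x y
    have h1 := spec_entry A hA x y
    have h2 := spec_delta A hA x y
    have h3 : A x y - δ * (if x = y then 1 else 0)
        = ∑ j, (hA.eigenvalues j - δ) * ((hA.eigenvectorBasis j : V → ℝ) x * (hA.eigenvectorBasis j : V → ℝ) y) := by
      rw [h1, ← h2, Finset.mul_sum, ← Finset.sum_sub_distrib]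
      exact Finset.sum_congr rfl fun j _ => by ring
    rw [h3, ← Finset.sum_subset (Finset.subset_univ ({i0, i1} : Finset V))]
    · rw [Finset.sum_insert (by simp [hi01]), Finset.sum_singleton]; ring
    · intro j _ hj
      simp only [Finset.mem_insert, Finset.mem_singleton, not_or] at hj
      rw [hrest j hj.1 hj.2]
      ring
  have hdet := gram3_det (hA.eigenvalues i0 - δ) (hA.eigenvalues i1 - δ)
    (fun p => (hA.eigenvectorBasis i0 : V → ℝ) (![a,b,c] p))
    (fun p => (hA.eigenvectorBasis i1 : V → ℝ) (![a,b,c] p))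
  have hMeq : (Matrix.of fun p q : Fin 3 =>
        (hA.eigenvalues i0 - δ) * (hA.eigenvectorBasis i0 : V → ℝ) (![a,b,c] p) * (hA.eigenvectorBasis i0 : V → ℝ) (![a,b,c] q)
        + (hA.eigenvalues i1 - δ) * (hA.eigenvectorBasis i1 : V → ℝ) (![a,b,c] p) * (hA.eigenvectorBasis i1 : V → ℝ) (![a,b,c] q))
      = Matrix.of fun p q : Fin 3 =>
          A (![a,b,c] p) (![a,b,c] q) - δ * (if ![a,b,c] p = ![a,b,c] q then 1 else 0) := by
    ext p q
    rw [Matrix.of_apply, Matrix.of_apply, hN]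
  rw [hMeq, Matrix.det_fin_three] at hdet
  simp only [Matrix.of_apply, Matrix.cons_val_zero, Matrix.cons_val_one, Matrix.head_cons,
    Matrix.cons_val_two, Matrix.tail_cons, eq_self_iff_true, if_true, if_pos rfl, if_neg hab, if_neg hac, if_neg hbc,
    if_neg (Ne.symm hab), if_neg (Ne.symm hac), if_neg (Ne.symm hbc), hdiag] at hdet
  simp only [hab, Ne.symm hab, if_false] at hdet
  rw [hsym b a, hsym c a, hsym c b] at hdet
  linear_combination hdet

lemma not_complete_aux [Nonempty V] (G : SimpleGraph V) (t : ℝ) (i : V)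
    (hcomp : ∀ u v : V, u ≠ v → G.Adj u v)
    (hi : (distMatrix_isHermitian G).eigenvalues i = t) :
    t = -1 ∨ t = (Fintype.card V : ℝ) - 1 := by
  classical
  set A := distMatrix G with hAdef
  have hA := distMatrix_isHermitian G
  set v : V → ℝ := ((distMatrix_isHermitian G).eigenvectorBasis i : V → ℝ) with hvdef
  have hvv : ∑ x, v x * v x = 1 := by simpa using spec_col A hA i i
  have hv : A *ᵥ v = t • v := by
    have h := hA.mulVec_eigenvectorBasis i
    rw [hi] at h
    exact h
  have hAval : ∀ u w : V, A u w = if u = w then 0 else 1 := by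
    intro u w
    by_cases h : u = w
    · subst h; simp [hAdef, distMatrix]
    · have := SimpleGraph.dist_eq_one_iff_adj.mpr (hcomp u w h)
      simp [hAdef, distMatrix, h, this]
  set S : ℝ := ∑ x, v x with hS
  have hrow : ∀ u, S - v u = t * v u := by
    intro u
    have h1 := congrFun hv u
    have h2 : (A *ᵥ v) u = ∑ x, A u x * v x := rfl
    rw [h2] at h1
    have h3 : ∑ x, A u x * v x = S - v u := by
      rw [hS]
      have : ∀ x : V, A u x * v x = v x - (if u = x then v x else 0) := by
        intro x
        rw [hAval]
        by_cases h : u = x <;> simp [h]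
      rw [Finset.sum_congr rfl fun x _ => this x, Finset.sum_sub_distrib,
        Finset.sum_ite_eq univ u v, if_pos (Finset.mem_univ u)]
    rw [h3] at h1
    rw [h1]
    simp [smul_eq_mul]
  by_cases hδ : t = -1
  · exact Or.inl hδ
  · right
    have hne : (1 : ℝ) + t ≠ 0 := fun h => hδ (by linarith)
    have hconst : ∀ u w : V, v u = v w := by
      intro u w
      have h1 := hrow u
      have h2 := hrow w
      have : (1 + t) * v u = (1 + t) * v w := by ring_nf; ring_nf at h1 h2; linarith
      exact mul_left_cancel₀ hne this
    obtain ⟨u0⟩ := ‹Nonempty V›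
    have hSc : S = (Fintype.card V : ℝ) * v u0 := by
      rw [hS]
      rw [Finset.sum_congr rfl fun x _ => hconst x u0]
      simp [Finset.card_univ, mul_comm]
    have hc0 : v u0 ≠ 0 := by
      intro h
      have hall : ∀ x, v x = 0 := fun x => (hconst x u0).trans h
      have hz : (∑ x, v x * v x) = 0 :=
        Finset.sum_eq_zero fun x _ => by rw [hall x, mul_zero]
      rw [hvv] at hz
      exact one_ne_zero hz
    have h1 := hrow u0
    rw [hSc] at h1
    have : (Fintype.card V : ℝ) - 1 - t = 0 := by
      have h2 : ((Fintype.card V : ℝ) - 1 - t) * v u0 = 0 := by ring_nf; ring_nf at h1; linarith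
      rcases mul_eq_zero.mp h2 with h | h
      · exact h
      · exact absurd h hc0
    linarith

lemma combinat (G : SimpleGraph V) (hconn : G.Connected) (σ : ℝ)
    (key : ∀ a b c : V, a ≠ b → a ≠ c → b ≠ c →
      σ^3 - σ * ((G.dist a b : ℝ)^2 + (G.dist a c : ℝ)^2 + (G.dist b c : ℝ)^2)
        + 2 * (G.dist a b : ℝ) * (G.dist a c : ℝ) * (G.dist b c : ℝ) = 0)
    (hnc : ∃ p q : V, p ≠ q ∧ ¬ G.Adj p q) :
    ∃ a b : ℕ, 0 < a ∧ 0 < b ∧ Nonempty (G ≃g completeBipartiteGraph (Fin a) (Fin b)) := by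
  classical
  have hne : ∀ {x y : V} {k : ℕ}, G.dist x y = k → 0 < k → x ≠ y := by
    intro x y k h hk hxy
    subst hxy
    rw [SimpleGraph.dist_self] at h
    omega
  -- diameter at most 2
  have hdiam : ∀ u v : V, G.dist u v ≤ 2 := by
    by_contra hco
    push_neg at hco
    obtain ⟨u, v, huv⟩ := hco
    set m := G.dist u v with hm
    obtain ⟨u1, ha1, hd1⟩ := dist_step G hconn (show G.dist u v = (m - 3 + 2) + 1 by omega)
    obtain ⟨u2, ha2, hd2⟩ := dist_step G hconn (show G.dist u1 v = (m - 3 + 1) + 1 by omega)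
    obtain ⟨u3, ha3, hd3⟩ := dist_step G hconn (show G.dist u2 v = (m - 3) + 1 by omega)
    have d01 : G.dist u u1 = 1 := SimpleGraph.dist_eq_one_iff_adj.mpr ha1
    have d12 : G.dist u1 u2 = 1 := SimpleGraph.dist_eq_one_iff_adj.mpr ha2
    have d23 : G.dist u2 u3 = 1 := SimpleGraph.dist_eq_one_iff_adj.mpr ha3
    have d02 : G.dist u u2 = 2 := by
      have hle : G.dist u u2 ≤ G.dist u u1 + G.dist u1 u2 := hconn.dist_triangle
      have hge : G.dist u v ≤ G.dist u u2 + G.dist u2 v := hconn.dist_triangle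
      omega
    have d03 : G.dist u u3 = 3 := by
      have hle : G.dist u u3 ≤ G.dist u u2 + G.dist u2 u3 := hconn.dist_triangle
      have hge : G.dist u v ≤ G.dist u u3 + G.dist u3 v := hconn.dist_triangle
      omega
    have d13 : G.dist u1 u3 = 2 := by
      have hle : G.dist u1 u3 ≤ G.dist u1 u2 + G.dist u2 u3 := hconn.dist_triangle
      have hge : G.dist u u3 ≤ G.dist u u1 + G.dist u1 u3 := hconn.dist_triangle
      omega
    have k1 := key u u1 u2 (hne d01 (by omega)) (hne d02 (by omega)) (hne d12 (by omega))
    have k2 := key u u2 u3 (hne d02 (by omega)) (hne d03 (by omega)) (hne d23 (by omega))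
    rw [d01, d02, d12] at k1
    rw [d02, d03, d23] at k2
    push_cast at k1 k2
    have hσ : σ = 1 := by nlinarith [k1, k2]
    rw [hσ] at k1
    norm_num at k1
  obtain ⟨p, q, hpq, hnadj⟩ := hnc
  have hdpq : G.dist p q = 2 := by
    have h1 := hconn.pos_dist_of_ne hpq
    have h2 := hdiam p q
    have h3 : G.dist p q ≠ 1 := fun h => hnadj (SimpleGraph.dist_eq_one_iff_adj.mp h)
    omega
  obtain ⟨mid, hm1, hm2⟩ := dist_step G hconn (show G.dist p q = 1 + 1 from hdpq)
  have hmadj : G.Adj mid q := SimpleGraph.dist_eq_one_iff_adj.mp hm2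
  have hE : σ^3 - 6*σ + 4 = 0 := by
    have k := key mid p q hm1.ne' (hmadj.ne) hpq
    have e1 : G.dist mid p = 1 := SimpleGraph.dist_eq_one_iff_adj.mpr (hm1.symm)
    rw [e1, hm2, hdpq] at k
    push_cast at k
    linarith
  have F2 : ∀ a b c : V, G.Adj a b → G.Adj a c → G.Adj b c → False := by
    intro a b c h1 h2 h3
    have k := key a b c h1.ne h2.ne h3.ne
    rw [SimpleGraph.dist_eq_one_iff_adj.mpr h1, SimpleGraph.dist_eq_one_iff_adj.mpr h2,
      SimpleGraph.dist_eq_one_iff_adj.mpr h3] at k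
    push_cast at k
    have hσ : σ = 2/3 := by linarith
    rw [hσ] at hE
    norm_num at hE
  have F1 : ∀ a b c : V, a ≠ b → a ≠ c → b ≠ c → G.dist a b = 2 → G.dist a c = 2 →
      G.dist b c = 1 → False := by
    intro a b c h1 h2 h3 e1 e2 e3
    have k := key a b c h1 h2 h3
    rw [e1, e2, e3] at k
    push_cast at k
    have hσ : σ = 4/3 := by linarith
    rw [hσ] at hE
    norm_num at hE
  have hdist12 : ∀ u v : V, u ≠ v → G.dist u v = 1 ∨ G.dist u v = 2 := by
    intro u v h
    have h1 := hconn.pos_dist_of_ne h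
    have h2 := hdiam u v
    omega
  -- the two parts
  set SA : Finset V := univ.filter (fun v => v = p ∨ G.dist p v = 2) with hSA
  set SB : Finset V := univ.filter (fun v => G.Adj p v) with hSB
  have hmemSA : ∀ v, v ∈ SA ↔ (v = p ∨ G.dist p v = 2) := by
    intro v; simp [hSA]
  have hmemSB : ∀ v, v ∈ SB ↔ G.Adj p v := by
    intro v; simp [hSB]
  have hcover : ∀ v : V, (v ∈ SA ∧ v ∉ SB) ∨ (v ∈ SB ∧ v ∉ SA) := by
    intro v
    by_cases hv : v = p
    · subst hv
      exact Or.inl ⟨(hmemSA v).mpr (Or.inl rfl), fun h => G.irrefl ((hmemSB v).mp h)⟩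
    · rcases hdist12 p v (Ne.symm hv) with h | h
      · refine Or.inr ⟨(hmemSB v).mpr (SimpleGraph.dist_eq_one_iff_adj.mp h), fun hcon => ?_⟩
        rcases (hmemSA v).mp hcon with h' | h'
        · exact hv h'
        · omega
      · refine Or.inl ⟨(hmemSA v).mpr (Or.inr h), fun hcon => ?_⟩
        have := SimpleGraph.dist_eq_one_iff_adj.mpr ((hmemSB v).mp hcon)
        omega
  have hAdjIff : ∀ u v : V, G.Adj u v ↔ ((u ∈ SA ∧ v ∈ SB) ∨ (u ∈ SB ∧ v ∈ SA)) := by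
    intro u v
    constructor
    · intro hadj
      have hAA : ¬ (u ∈ SA ∧ v ∈ SA) := by
        rintro ⟨hu, hv⟩
        rcases (hmemSA u).mp hu with rfl | hu2
        · rcases (hmemSA v).mp hv with rfl | hv2
          · exact G.irrefl hadj
          · have := SimpleGraph.dist_eq_one_iff_adj.mpr hadj
            omega
        · rcases (hmemSA v).mp hv with rfl | hv2
          · have := SimpleGraph.dist_eq_one_iff_adj.mpr (hadj.symm)
            omega
          · exact F1 p u v (hne hu2 (by omega)) (hne hv2 (by omega)) hadj.ne hu2 hv2
              (SimpleGraph.dist_eq_one_iff_adj.mpr hadj)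
      have hBB : ¬ (u ∈ SB ∧ v ∈ SB) := by
        rintro ⟨hu, hv⟩
        exact F2 p u v ((hmemSB u).mp hu) ((hmemSB v).mp hv) hadj
      rcases hcover u with ⟨h1, h2⟩ | ⟨h1, h2⟩ <;> rcases hcover v with ⟨h3, h4⟩ | ⟨h3, h4⟩
      · exact absurd ⟨h1, h3⟩ hAA
      · exact Or.inl ⟨h1, h3⟩
      · exact Or.inr ⟨h1, h3⟩
      · exact absurd ⟨h1, h3⟩ hBB
    · rintro (⟨hu, hv⟩ | ⟨hu, hv⟩)
      · have huv : u ≠ v := by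
          rintro rfl
          rcases hcover u with h | h <;> tauto
        rcases hdist12 u v huv with h | h
        · exact SimpleGraph.dist_eq_one_iff_adj.mp h
        · exfalso
          rcases (hmemSA u).mp hu with rfl | hu2
          · have := SimpleGraph.dist_eq_one_iff_adj.mpr ((hmemSB v).mp hv)
            omega
          · have hv1 : G.dist p v = 1 := SimpleGraph.dist_eq_one_iff_adj.mpr ((hmemSB v).mp hv)
            refine F1 u p v (Ne.symm (hne hu2 (by omega))) huv (hne hv1 (by omega)) ?_ h hv1
            rw [SimpleGraph.dist_comm]
            exact hu2
      · have huv : u ≠ v := by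
          rintro rfl
          rcases hcover u with h | h <;> tauto
        rcases hdist12 u v huv with h | h
        · exact SimpleGraph.dist_eq_one_iff_adj.mp h
        · exfalso
          rcases (hmemSA v).mp hv with rfl | hv2
          · have := SimpleGraph.dist_eq_one_iff_adj.mpr ((hmemSB u).mp hu)
            rw [SimpleGraph.dist_comm] at h
            omega
          · have hu1 : G.dist p u = 1 := SimpleGraph.dist_eq_one_iff_adj.mpr ((hmemSB u).mp hu)
            refine F1 v p u (Ne.symm (hne hv2 (by omega))) (Ne.symm huv) (hne hu1 (by omega)) ?_
              (by rw [SimpleGraph.dist_comm]; exact h) hu1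
            rw [SimpleGraph.dist_comm]
            exact hv2
  -- build the isomorphism
  have hpSA : p ∈ SA := (hmemSA p).mpr (Or.inl rfl)
  have hmidSB : mid ∈ SB := (hmemSB mid).mpr hm1
  set P : V → Prop := fun v => v ∈ SA with hP
  have hPB : ∀ x, ¬ P x ↔ x ∈ SB := by
    intro x
    rcases hcover x with ⟨h1, h2⟩ | ⟨h1, h2⟩
    · simp [hP, h1, h2]
    · simp [hP, h1, h2]
  let e1 : V ≃ {x // P x} ⊕ {x // ¬ P x} := (Equiv.sumCompl P).symm
  let eA : {x // P x} ≃ Fin SA.card :=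
    Fintype.equivFinOfCardEq (by simp [hP, Fintype.card_coe])
  let eB : {x // ¬ P x} ≃ Fin SB.card :=
    (Equiv.subtypeEquivRight hPB).trans (Fintype.equivFinOfCardEq (Fintype.card_coe SB))
  let e : V ≃ (Fin SA.card ⊕ Fin SB.card) := e1.trans (Equiv.sumCongr eA eB)
  have heL : ∀ x : V, x ∈ SA → ∃ y, e x = Sum.inl y := by
    intro x hx
    refine ⟨eA ⟨x, hx⟩, ?_⟩
    simp only [e, e1, Equiv.trans_apply, Equiv.sumCompl_symm_apply_of_pos (show P x from hx),
      Equiv.sumCongr_apply, Sum.map_inl]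
  have heR : ∀ x : V, x ∈ SB → ∃ y, e x = Sum.inr y := by
    intro x hx
    have hx' : ¬ P x := (hPB x).mpr hx
    refine ⟨eB ⟨x, hx'⟩, ?_⟩
    simp only [e, e1, Equiv.trans_apply, Equiv.sumCompl_symm_apply_of_neg hx',
      Equiv.sumCongr_apply, Sum.map_inr]
  refine ⟨SA.card, SB.card, Finset.card_pos.mpr ⟨p, hpSA⟩, Finset.card_pos.mpr ⟨mid, hmidSB⟩,
    ⟨⟨e, ?_⟩⟩⟩
  intro u v
  simp only [completeBipartiteGraph_adj]
  rw [hAdjIff u v]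
  rcases hcover u with ⟨h1, h2⟩ | ⟨h1, h2⟩ <;> rcases hcover v with ⟨h3, h4⟩ | ⟨h3, h4⟩
  · obtain ⟨y1, hy1⟩ := heL u h1
    obtain ⟨y2, hy2⟩ := heL v h3
    rw [hy1, hy2]
    simp [h1, h2, h3, h4]
  · obtain ⟨y1, hy1⟩ := heL u h1
    obtain ⟨y2, hy2⟩ := heR v h3
    rw [hy1, hy2]
    simp [h1, h2, h3, h4]
  · obtain ⟨y1, hy1⟩ := heR u h1
    obtain ⟨y2, hy2⟩ := heL v h3
    rw [hy1, hy2]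
    simp [h1, h2, h3, h4]
  · obtain ⟨y1, hy1⟩ := heR u h1
    obtain ⟨y2, hy2⟩ := heR v h3
    rw [hy1, hy2]
    simp [h1, h2, h3, h4]

end DCube9

open DCube9 in
theorem dcube_stmt9 {V : Type*} [Fintype V] [DecidableEq V] (G : SimpleGraph V)
    (hn : 3 ≤ Fintype.card V) (hconn : G.Connected)
    (δ0 δ1 δ2 : ℝ) (h21 : δ2 < δ1) (h10 : δ1 < δ0)
    (hspec : (distSpec G).toFinset = {δ0, δ1, δ2})
    (hsimple : (distSpec G).count δ1 = 1 ∨ (distSpec G).count δ2 = 1) :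
    ∃ a b : ℕ, 0 < a ∧ 0 < b ∧
      Nonempty (G ≃g completeBipartiteGraph (Fin a) (Fin b)) := by
  classical
  have hA := distMatrix_isHermitian G
  set A := distMatrix G with hAdef
  haveI hnV : Nonempty V := Fintype.card_pos_iff.mp (by omega)
  have hdiag : ∀ v, A v v = 0 := by intro v; simp [hAdef, distMatrix]
  have hoff : ∀ u v : V, u ≠ v → 0 < A u v := by
    intro u v h
    have h1 := hconn.pos_dist_of_ne h
    simp only [hAdef, distMatrix, Matrix.of_apply]
    exact_mod_cast h1
  have hmem : ∀ i, hA.eigenvalues i = δ0 ∨ hA.eigenvalues i = δ1 ∨ hA.eigenvalues i = δ2 := by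
    intro i
    have h1 : hA.eigenvalues i ∈ distSpec G :=
      Multiset.mem_map_of_mem _ (Finset.mem_val.mpr (Finset.mem_univ i))
    have h2 : hA.eigenvalues i ∈ (distSpec G).toFinset := Multiset.mem_toFinset.mpr h1
    rw [hspec] at h2
    simpa using h2
  have hmax : ∀ i, hA.eigenvalues i ≤ δ0 := by
    intro i; rcases hmem i with h | h | h <;> rw [h] <;> linarith
  have hexists : ∀ t : ℝ, t ∈ ({δ0, δ1, δ2} : Finset ℝ) → ∃ i, hA.eigenvalues i = t := by
    intro t ht
    rw [← hspec] at ht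
    obtain ⟨i, _, h⟩ := Multiset.mem_map.mp (Multiset.mem_toFinset.mp ht)
    exact ⟨i, h⟩
  have hcount : ∀ t : ℝ, (distSpec G).count t
      = (univ.filter (fun i => hA.eigenvalues i = t)).card := by
    intro t
    simp [distSpec, Multiset.count_map, Finset.filter, eq_comm]
  have hperron := perron_unique A hA δ0 hmax hdiag hoff
  have hcard0 : (univ.filter (fun i => hA.eigenvalues i = δ0)).card = 1 := by
    obtain ⟨i, hi⟩ := hexists δ0 (by simp)
    rw [Finset.card_eq_one]
    refine ⟨i, ?_⟩
    ext j
    simp only [Finset.mem_filter, Finset.mem_univ, true_and, Finset.mem_singleton]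
    exact ⟨fun h => hperron j i h hi, fun h => h ▸ hi⟩
  have hstruct : ∃ i0 i1 : V, i0 ≠ i1 ∧ ∃ δ : ℝ, ∀ j, j ≠ i0 → j ≠ i1 → hA.eigenvalues j = δ := by
    have main : ∀ δa δb : ℝ, δa ≠ δb → δa ≠ δ0 → δb ≠ δ0 →
        (∀ i, hA.eigenvalues i = δ0 ∨ hA.eigenvalues i = δa ∨ hA.eigenvalues i = δb) →
        (univ.filter (fun i => hA.eigenvalues i = δa)).card = 1 →
        ∃ i0 i1 : V, i0 ≠ i1 ∧ ∃ δ : ℝ, ∀ j, j ≠ i0 → j ≠ i1 → hA.eigenvalues j = δ := by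
      intro δa δb hab ha0 hb0 hmem' hcarda
      have hunion : univ.filter (fun i => hA.eigenvalues i ≠ δb)
          = univ.filter (fun i => hA.eigenvalues i = δ0)
            ∪ univ.filter (fun i => hA.eigenvalues i = δa) := by
        ext j
        simp only [Finset.mem_filter, Finset.mem_union, Finset.mem_univ, true_and]
        constructor
        · intro h
          rcases hmem' j with h' | h' | h'
          · exact Or.inl h'
          · exact Or.inr h'
          · exact absurd h' h
        · rintro (h | h) <;> rw [h]
          · exact Ne.symm hb0
          · exact hab
      have hdisj : Disjoint (univ.filter (fun i => hA.eigenvalues i = δ0))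
          (univ.filter (fun i => hA.eigenvalues i = δa)) := by
        rw [Finset.disjoint_left]
        intro x hx hy
        simp only [Finset.mem_filter] at hx hy
        exact ha0 (hy.2.symm.trans hx.2)
      have hcard2 : (univ.filter (fun i => hA.eigenvalues i ≠ δb)).card = 2 := by
        rw [hunion, Finset.card_union_of_disjoint hdisj, hcard0, hcarda]
      obtain ⟨i0, i1, hne, hset⟩ := Finset.card_eq_two.mp hcard2
      refine ⟨i0, i1, hne, δb, fun j hj0 hj1 => ?_⟩
      by_contra h
      have hj : j ∈ univ.filter (fun i => hA.eigenvalues i ≠ δb) := by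
        simp only [Finset.mem_filter, Finset.mem_univ, true_and]
        exact h
      rw [hset] at hj
      simp only [Finset.mem_insert, Finset.mem_singleton] at hj
      tauto
    rcases hsimple with hs | hs
    · refine main δ1 δ2 (by linarith) (by linarith) (by linarith) hmem ?_
      rw [hcount] at hs
      exact hs
    · refine main δ2 δ1 (by linarith) (by linarith) (by linarith) ?_ ?_
      · intro i
        rcases hmem i with h | h | h
        · exact Or.inl h
        · exact Or.inr (Or.inr h)
        · exact Or.inr (Or.inl h)
      · rw [hcount] at hs
        exact hs
  obtain ⟨i0, i1, hi01, δ, hrest⟩ := hstruct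
  have hsym : ∀ x y : V, A x y = A y x := by
    intro x y
    conv_lhs => rw [← hA]
    simp [Matrix.conjTranspose_apply]
  have hnc : ∃ p q : V, p ≠ q ∧ ¬ G.Adj p q := by
    by_contra hcon
    push_neg at hcon
    have h3 : (3 : ℝ) ≤ (Fintype.card V : ℝ) := by exact_mod_cast hn
    obtain ⟨j0, hj0⟩ := hexists δ0 (by simp)
    obtain ⟨j1, hj1⟩ := hexists δ1 (by simp)
    obtain ⟨j2, hj2⟩ := hexists δ2 (by simp)
    have c0 := not_complete_aux G δ0 j0 hcon hj0
    have c1 := not_complete_aux G δ1 j1 hcon hj1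
    have c2 := not_complete_aux G δ2 j2 hcon hj2
    rcases c0 with c0 | c0 <;> rcases c1 with c1 | c1 <;> rcases c2 with c2 | c2 <;> linarith
  have key : ∀ a b c : V, a ≠ b → a ≠ c → b ≠ c →
      (-δ)^3 - (-δ) * ((G.dist a b : ℝ)^2 + (G.dist a c : ℝ)^2 + (G.dist b c : ℝ)^2)
        + 2 * (G.dist a b : ℝ) * (G.dist a c : ℝ) * (G.dist b c : ℝ) = 0 := by
    intro a b c hab hac hbc
    exact key_cubic A hA δ i0 i1 hi01 hrest hdiag hsym a b c hab hac hbc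
  exact combinat G hconn (-δ) key hnc
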